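/- arXiv:2404.15703 — 2 statements merged into one kernel-verified Lean document; each statement's English description precedes it below -/
import Mathlib

section
/- (Unisolvence of AF3) If p is a bivariate polynomial of degree at most 2 on the reference triangle T with vertices v₁=(1,0), v₂=(0,1), v₃=(0,0), and p(v_j) = 0 and ∫₀¹ p(t v_{j+1} + (1-t)v_{j+2}) dt = 0 for j = 1,2,3 (indices mod 3), then p = 0. -/
open MvPolynomial

noncomputable section

/-- Vertices of the reference triangle. -/
def vtx : Fin 3 → ℝ × ℝ := ![(1, 0), (0, 1), (0, 0)]

/-- Barycentric coordinates on the reference triangle. -/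
def lam : Fin 3 → ℝ × ℝ → ℝ := ![fun q => q.1, fun q => q.2, fun q => 1 - q.1 - q.2]

/-- The AF3 basis functions φᵢ = λᵢ(1 - 3λ_{i+1} - 3λ_{i+2}). -/
def bphi (i : Fin 3) (q : ℝ × ℝ) : ℝ :=
  lam i q * (1 - 3 * lam (i + 1) q - 3 * lam (i + 2) q)

/-- The AF3 basis functions ϕᵢ = 6 λ_{i+1} λ_{i+2}. -/
def sphi (i : Fin 3) (q : ℝ × ℝ) : ℝ := 6 * lam (i + 1) q * lam (i + 2) q

/-- Evaluation of a bivariate polynomial at a point of ℝ². -/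
def evalP (p : MvPolynomial (Fin 2) ℝ) (q : ℝ × ℝ) : ℝ :=
  MvPolynomial.eval ![q.1, q.2] p

/-- The exponent finsupp with exponent `a` on the first and `b` on the second variable. -/
def mab (a b : ℕ) : Fin 2 →₀ ℕ := Finsupp.single 0 a + Finsupp.single 1 b

lemma mab_eq_iff (a b a' b' : ℕ) : mab a b = mab a' b' ↔ a = a' ∧ b = b' := by
  constructor
  · intro h
    constructor
    · have := DFunLike.congr_fun h 0; simpa [mab, Finsupp.single_apply] using this
    · have := DFunLike.congr_fun h 1; simpa [mab, Finsupp.single_apply] using this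
  · rintro ⟨rfl, rfl⟩; rfl

lemma eq_mab (d : Fin 2 →₀ ℕ) : d = mab (d 0) (d 1) := by
  ext i; fin_cases i <;> simp [mab, Finsupp.single_apply]

lemma rep (p : MvPolynomial (Fin 2) ℝ) (hp : p.totalDegree ≤ 2) :
    p = C (coeff (mab 0 0) p) * X 0 ^ 0 * X 1 ^ 0
      + C (coeff (mab 1 0) p) * X 0 ^ 1 * X 1 ^ 0
      + C (coeff (mab 0 1) p) * X 0 ^ 0 * X 1 ^ 1
      + C (coeff (mab 2 0) p) * X 0 ^ 2 * X 1 ^ 0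
      + C (coeff (mab 1 1) p) * X 0 ^ 1 * X 1 ^ 1
      + C (coeff (mab 0 2) p) * X 0 ^ 0 * X 1 ^ 2 := by
  have hd : ∀ d ∈ p.support, d 0 + d 1 ≤ 2 := by
    intro d hdm
    have := MvPolynomial.le_totalDegree hdm
    rw [Finsupp.sum_fintype _ _ (fun _ => rfl), Fin.sum_univ_two] at this
    omega
  have hrw : ∀ a b : ℕ, (C (coeff (mab a b) p) * X 0 ^ a * X 1 ^ b : MvPolynomial (Fin 2) ℝ)
      = monomial (mab a b) (coeff (mab a b) p) := by
    intro a b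
    rw [MvPolynomial.X_pow_eq_monomial, MvPolynomial.X_pow_eq_monomial,
      MvPolynomial.C_mul_monomial, MvPolynomial.monomial_mul]
    simp [mab]
  ext m
  rw [hrw, hrw, hrw, hrw, hrw, hrw]
  simp only [coeff_add, coeff_monomial]
  by_cases h2 : m 0 + m 1 ≤ 2
  · rw [eq_mab m]
    have h0 : m 0 ≤ 2 := by omega
    have h1 : m 1 ≤ 2 := by omega
    interval_cases h0' : m 0 <;> interval_cases h1' : m 1 <;>
      simp_all [mab_eq_iff]
  · have hz : coeff m p = 0 := by
      by_contra hne
      exact h2 (hd m (MvPolynomial.mem_support_iff.mpr hne))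
    have hne : ∀ a b : ℕ, a + b ≤ 2 → ¬ (mab a b = m) := by
      intro a b hab h
      rw [eq_mab m, mab_eq_iff] at h
      omega
    rw [hz, if_neg (hne 0 0 (by omega)), if_neg (hne 1 0 (by omega)),
      if_neg (hne 0 1 (by omega)), if_neg (hne 2 0 (by omega)),
      if_neg (hne 1 1 (by omega)), if_neg (hne 0 2 (by omega))]
    simp

lemma int_quad (A B C : ℝ) :
    (∫ t in (0:ℝ)..1, (A + B * t + C * t ^ 2)) = A + B / 2 + C / 3 := by
  rw [intervalIntegral.integral_add (by apply Continuous.intervalIntegrable; fun_prop)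
      (by apply Continuous.intervalIntegrable; fun_prop),
    intervalIntegral.integral_add (by apply Continuous.intervalIntegrable; fun_prop)
      (by apply Continuous.intervalIntegrable; fun_prop),
    intervalIntegral.integral_const, intervalIntegral.integral_const_mul,
    intervalIntegral.integral_const_mul, integral_id, integral_pow]
  norm_num
  ring

theorem AF3_unisolvent (p : MvPolynomial (Fin 2) ℝ) (hp : p.totalDegree ≤ 2)
    (hv : ∀ j : Fin 3, evalP p (vtx j) = 0)
    (he : ∀ j : Fin 3,
      (∫ t in (0:ℝ)..1, evalP p (t • vtx (j + 1) + (1 - t) • vtx (j + 2))) = 0) :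
    p = 0 := by
  set a00 := coeff (mab 0 0) p with ha00
  set a10 := coeff (mab 1 0) p with ha10
  set a01 := coeff (mab 0 1) p with ha01
  set a20 := coeff (mab 2 0) p with ha20
  set a11 := coeff (mab 1 1) p with ha11
  set a02 := coeff (mab 0 2) p with ha02
  have hev : ∀ q : ℝ × ℝ, evalP p q
      = a00 + a10 * q.1 + a01 * q.2 + a20 * q.1 ^ 2 + a11 * (q.1 * q.2) + a02 * q.2 ^ 2 := by
    intro q
    conv_lhs => rw [evalP, rep p hp]
    simp
    ring
  -- vertex conditions
  have E1 : a00 + a10 + a20 = 0 := by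
    have h := hv 0; rw [hev] at h; simpa [vtx] using h
  have E2 : a00 + a01 + a02 = 0 := by
    have h := hv 1; rw [hev] at h; simpa [vtx] using h
  have E3 : a00 = 0 := by
    have h := hv 2; rw [hev] at h; simpa [vtx] using h
  -- edge conditions
  have E4 : a00 + a01 / 2 + a02 / 3 = 0 := by
    have h := he 0
    rw [intervalIntegral.integral_congr
      (g := fun t : ℝ => a00 + a01 * t + a02 * t ^ 2)
      (fun t _ => by rw [hev]; simp [vtx]; try ring), int_quad] at h
    linarith
  have E5 : a00 + a10 / 2 + a20 / 3 = 0 := by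
    have h := he 1
    rw [intervalIntegral.integral_congr
      (g := fun t : ℝ => (a00 + a10 + a20) + (-a10 - 2 * a20) * t + a20 * t ^ 2)
      (fun t _ => by rw [hev]; simp [vtx]; try ring), int_quad] at h
    linarith
  have E6 : a00 + a10 / 2 + a01 / 2 + a20 / 3 + a11 / 6 + a02 / 3 = 0 := by
    have h := he 2
    rw [intervalIntegral.integral_congr
      (g := fun t : ℝ => (a00 + a01 + a02) + (a10 - a01 + a11 - 2 * a02) * t
        + (a20 - a11 + a02) * t ^ 2)
      (fun t _ => by rw [hev]; simp [vtx]; try ring), int_quad] at h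
    linarith
  have z00 : a00 = 0 := E3
  have z10 : a10 = 0 := by linarith
  have z20 : a20 = 0 := by linarith
  have z01 : a01 = 0 := by linarith
  have z02 : a02 = 0 := by linarith
  have z11 : a11 = 0 := by linarith
  rw [rep p hp, ← ha00, ← ha10, ← ha01, ← ha20, ← ha11, ← ha02,
    z00, z10, z01, z20, z11, z02]
  simp

end
end

section
/- Let α > -1, α ≠ -6/7. Define on the reference triangle T (vertices v₁=(1,0), v₂=(0,1), v₃=(0,0)) the polynomials ψ_i = c_α φ_i + d_α Σ_{k≠i} φ_k + ϕ_i, with c_α = 3(11α²+20α+12)/((α+6)(7α+6)), d_α = 3(-3α²+8α+12)/((α+6)(7α+6)), and φ_k, ϕ_k the AF3 basis functions (φ_k = λ_k(1-3λ_{k+1}-3λ_{k+2}), ϕ_k = 6λ_{k+1}λ_{k+2}). Then for all i,j ∈ {1,2,3}: ∫₀¹ ψ_i(t v_{j+1}+(1-t)v_{j+2}) dt = δ_ij and ∫₀¹ t^α(1-t)^α ψ_i(t v_j + (1-t)m_j) dt = 0, where m_j is the midpoint of the edge opposite v_j. -/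
open MvPolynomial

noncomputable section

/-- Midpoint of the edge opposite vertex `j`. -/
def mid (j : Fin 3) : ℝ × ℝ := (1 / 2 : ℝ) • (vtx (j + 1) + vtx (j + 2))

/-- The basis functions ψᵢ = c_α φᵢ + d_α (φ_{i+1} + φ_{i+2}) + ϕᵢ. -/
def psi (α : ℝ) (i : Fin 3) (q : ℝ × ℝ) : ℝ :=
  (3 * (11 * α ^ 2 + 20 * α + 12) / ((α + 6) * (7 * α + 6))) * bphi i q +
  (3 * (-3 * α ^ 2 + 8 * α + 12) / ((α + 6) * (7 * α + 6))) *
    (bphi (i + 1) q + bphi (i + 2) q) +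
  sphi i q

/-! ### Auxiliary material for the proof -/

/-- The coefficient `c_α`. -/
def cA (α : ℝ) : ℝ := 3 * (11 * α ^ 2 + 20 * α + 12) / ((α + 6) * (7 * α + 6))

/-- The coefficient `d_α`. -/
def dA (α : ℝ) : ℝ := 3 * (-3 * α ^ 2 + 8 * α + 12) / ((α + 6) * (7 * α + 6))

open MeasureTheory intervalIntegral Complex in
/-- Integral of a quadratic polynomial over `[0,1]`. -/
lemma part1_eval (f : ℝ → ℝ) (A B C R : ℝ) (hf : ∀ t, f t = A*t^2+B*t+C)
    (hR : A/3 + B/2 + C = R) : (∫ t in (0:ℝ)..1, f t) = R := by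
  simp only [hf]
  have h1 : IntervalIntegrable (fun t : ℝ => A*t^2) volume 0 1 :=
    (continuous_const.mul (continuous_pow 2)).intervalIntegrable _ _
  have h2 : IntervalIntegrable (fun t : ℝ => B*t) volume 0 1 :=
    (continuous_const.mul continuous_id).intervalIntegrable _ _
  have h3 : IntervalIntegrable (fun _ : ℝ => C) volume 0 1 :=
    continuous_const.intervalIntegrable _ _
  rw [intervalIntegral.integral_add (h1.add h2) h3, intervalIntegral.integral_add h1 h2,
    intervalIntegral.integral_const_mul, intervalIntegral.integral_const_mul,
    integral_pow, integral_id, intervalIntegral.integral_const]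
  norm_num
  linarith

open MeasureTheory intervalIntegral Complex in
lemma cpow_split_int (α : ℝ) (hα : -1 < α) :
    ∀ k : ℕ, IntervalIntegrable
      (fun x : ℝ => (x:ℂ) ^ ((α:ℂ)+k) * (1-(x:ℂ)) ^ (α:ℂ)) volume 0 1 := by
  intro k
  have h1 : (0:ℝ) < ((α:ℂ)+1+k).re := by
    simp only [Complex.add_re, Complex.ofReal_re, Complex.one_re, Complex.natCast_re]
    have : (0:ℝ) ≤ k := Nat.cast_nonneg k
    linarith
  have h2 : (0:ℝ) < ((α:ℂ)+1).re := by
    simp only [Complex.add_re, Complex.ofReal_re, Complex.one_re]; linarith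
  have := Complex.betaIntegral_convergent (u := (α:ℂ)+1+k) (v := (α:ℂ)+1) h1 h2
  simpa only [show (α:ℂ)+1+k-1 = (α:ℂ)+k by ring, add_sub_cancel_right] using this

open MeasureTheory intervalIntegral Complex in
/-- The key moment computation: if `(α+2)A + (2α+3)(B+2C) = 0`, then the Jacobi-weighted
integral of `A t² + B t + C` over `[0,1]` vanishes. -/
lemma key_integral (α : ℝ) (hα : -1 < α) (A B C : ℝ)
    (h : (α+2)*A + (2*α+3)*(B+2*C) = 0) (f : ℝ → ℝ)
    (hf : ∀ t, f t = A*t^2+B*t+C) :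
    (∫ t in (0:ℝ)..1, t ^ α * (1-t) ^ α * f t) = 0 := by
  simp only [hf]
  have int0 : IntervalIntegrable (fun x : ℝ => (x:ℂ) ^ (α:ℂ) * (1-(x:ℂ)) ^ (α:ℂ)) volume 0 1 := by
    simpa using cpow_split_int α hα 0
  have int1 : IntervalIntegrable (fun x : ℝ => (x:ℂ) ^ ((α:ℂ)+1) * (1-(x:ℂ)) ^ (α:ℂ)) volume 0 1 := by
    simpa using cpow_split_int α hα 1
  have int2 : IntervalIntegrable (fun x : ℝ => (x:ℂ) ^ ((α:ℂ)+2) * (1-(x:ℂ)) ^ (α:ℂ)) volume 0 1 := by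
    simpa using cpow_split_int α hα 2
  set I0 : ℂ := ∫ x : ℝ in (0:ℝ)..1, (x:ℂ) ^ (α:ℂ) * (1-(x:ℂ)) ^ (α:ℂ) with hI0
  set I1 : ℂ := ∫ x : ℝ in (0:ℝ)..1, (x:ℂ) ^ ((α:ℂ)+1) * (1-(x:ℂ)) ^ (α:ℂ) with hI1
  set I2 : ℂ := ∫ x : ℝ in (0:ℝ)..1, (x:ℂ) ^ ((α:ℂ)+2) * (1-(x:ℂ)) ^ (α:ℂ) with hI2
  have hne1 : (α:ℂ) + 1 ≠ 0 := by
    intro hcon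
    have := congrArg Complex.re hcon
    simp only [Complex.add_re, Complex.ofReal_re, Complex.one_re, Complex.zero_re] at this
    linarith
  have hne2 : (α:ℂ) + 2 ≠ 0 := by
    intro hcon
    have := congrArg Complex.re hcon
    simp only [Complex.add_re, Complex.ofReal_re, Complex.zero_re] at this
    norm_num at this
    linarith
  -- Step 1: the real integral, cast to ℂ, equals A*I2 + B*I1 + C*I0
  have key0 : ((∫ t in (0:ℝ)..1, t^α*(1-t)^α*(A*t^2+B*t+C) : ℝ) : ℂ)
      = (A:ℂ)*I2 + (B:ℂ)*I1 + (C:ℂ)*I0 := by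
    rw [← intervalIntegral.integral_ofReal]
    have hcg : (∫ t in (0:ℝ)..1, ((t^α*(1-t)^α*(A*t^2+B*t+C) : ℝ) : ℂ)) =
        ∫ t in (0:ℝ)..1, ((A:ℂ)*((t:ℂ)^((α:ℂ)+2)*(1-(t:ℂ))^(α:ℂ)) +
          ((B:ℂ)*((t:ℂ)^((α:ℂ)+1)*(1-(t:ℂ))^(α:ℂ)) +
           (C:ℂ)*((t:ℂ)^(α:ℂ)*(1-(t:ℂ))^(α:ℂ)))) := by
      apply intervalIntegral.integral_congr
      intro x hx
      rw [Set.uIcc_of_le (by norm_num : (0:ℝ) ≤ 1)] at hx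
      obtain ⟨hx0, hx1⟩ := hx
      push_cast [Complex.ofReal_cpow hx0, Complex.ofReal_cpow (by linarith : (0:ℝ) ≤ 1 - x)]
      rcases eq_or_lt_of_le hx0 with h0 | h0
      · rw [← h0]
        norm_num [Complex.zero_cpow hne1, Complex.zero_cpow hne2]
        try ring
      · have hxC : (x:ℂ) ≠ 0 := Complex.ofReal_ne_zero.mpr (ne_of_gt h0)
        have hp2 : (x:ℂ)^((α:ℂ)+2) = (x:ℂ)^(α:ℂ) * (x:ℂ)^(2:ℕ) := by
          rw [show (α:ℂ)+2 = (α:ℂ)+1+1 by ring, Complex.cpow_add _ _ hxC,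
            Complex.cpow_add _ _ hxC, Complex.cpow_one]
          ring
        have hp1 : (x:ℂ)^((α:ℂ)+1) = (x:ℂ)^(α:ℂ) * (x:ℂ) := by
          rw [Complex.cpow_add _ _ hxC, Complex.cpow_one]
        rw [hp2, hp1]
        ring
    rw [hcg, intervalIntegral.integral_add (int2.const_mul _)
        ((int1.const_mul _).add (int0.const_mul _)),
      intervalIntegral.integral_add (int1.const_mul _) (int0.const_mul _),
      intervalIntegral.integral_const_mul, intervalIntegral.integral_const_mul,
      intervalIntegral.integral_const_mul]
    rw [← hI0, ← hI1, ← hI2]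
    ring
  -- Step 2: I0 = 2 I1  (symmetry of Beta)
  have hb1 : Complex.betaIntegral ((α:ℂ)+2) ((α:ℂ)+1) = I1 := by
    rw [Complex.betaIntegral, hI1]
    simp only [show (α:ℂ)+2-1 = (α:ℂ)+1 by ring, add_sub_cancel_right]
  have e1 : I0 = 2 * I1 := by
    have hs : Complex.betaIntegral ((α:ℂ)+1) ((α:ℂ)+2) = Complex.betaIntegral ((α:ℂ)+2) ((α:ℂ)+1) :=
      Complex.betaIntegral_symm _ _
    have hb0 : Complex.betaIntegral ((α:ℂ)+1) ((α:ℂ)+2) = I0 - I1 := by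
      rw [Complex.betaIntegral, hI0, hI1, ← intervalIntegral.integral_sub int0 int1]
      apply intervalIntegral.integral_congr
      intro x hx
      rw [Set.uIcc_of_le (by norm_num : (0:ℝ) ≤ 1)] at hx
      obtain ⟨hx0, hx1⟩ := hx
      simp only [add_sub_cancel_right, show (α:ℂ)+2-1 = (α:ℂ)+1 by ring]
      rcases eq_or_lt_of_le hx1 with h1 | h1
      · rw [h1]
        norm_num [Complex.one_cpow, Complex.zero_cpow hne1]
        try ring
      · have hyC : (1:ℂ) - (x:ℂ) ≠ 0 := by
          rw [sub_ne_zero]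
          exact fun hc => (ne_of_lt h1) (by exact_mod_cast hc.symm)
        rcases eq_or_lt_of_le hx0 with h0 | h0
        · rw [← h0]
          norm_num [Complex.zero_cpow hne1]
          try ring
        · have hxC : (x:ℂ) ≠ 0 := Complex.ofReal_ne_zero.mpr (ne_of_gt h0)
          have hp1 : (x:ℂ)^((α:ℂ)+1) = (x:ℂ)^(α:ℂ) * (x:ℂ) := by
            rw [Complex.cpow_add _ _ hxC, Complex.cpow_one]
          have hq1 : ((1:ℂ)-(x:ℂ))^((α:ℂ)+1) = ((1:ℂ)-(x:ℂ))^(α:ℂ) * ((1:ℂ)-(x:ℂ)) := by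
            rw [Complex.cpow_add _ _ hyC, Complex.cpow_one]
          rw [hp1, hq1]
          ring
    have := hb0.symm.trans (hs.trans hb1)
    linear_combination this
  -- Step 3: (α+2) * I1 = (2α+3) * I2  (recurrence)
  have e2 : ((α:ℂ)+2) * I1 = (2*(α:ℂ)+3) * I2 := by
    have hrp2 : (0:ℝ) < ((α:ℂ)+2).re := by
      simp only [Complex.add_re, Complex.ofReal_re]
      norm_num; linarith
    have hrp1 : (0:ℝ) < ((α:ℂ)+1).re := by
      simp only [Complex.add_re, Complex.ofReal_re, Complex.one_re]; linarith
    have hrec := Complex.betaIntegral_recurrence (u := (α:ℂ)+2) (v := (α:ℂ)+1) hrp2 hrp1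
    simp only [show ((α:ℂ)+1)+1 = (α:ℂ)+2 by ring, show ((α:ℂ)+2)+1 = (α:ℂ)+3 by ring] at hrec
    have hbm : Complex.betaIntegral ((α:ℂ)+2) ((α:ℂ)+2) = I1 - I2 := by
      rw [Complex.betaIntegral, hI1, hI2, ← intervalIntegral.integral_sub int1 int2]
      apply intervalIntegral.integral_congr
      intro x hx
      rw [Set.uIcc_of_le (by norm_num : (0:ℝ) ≤ 1)] at hx
      obtain ⟨hx0, hx1⟩ := hx
      simp only [show (α:ℂ)+2-1 = (α:ℂ)+1 by ring]
      rcases eq_or_lt_of_le hx1 with h1 | h1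
      · rw [h1]
        norm_num [Complex.one_cpow, Complex.zero_cpow hne1]
        try ring
      · have hyC : (1:ℂ) - (x:ℂ) ≠ 0 := by
          rw [sub_ne_zero]
          exact fun hc => (ne_of_lt h1) (by exact_mod_cast hc.symm)
        rcases eq_or_lt_of_le hx0 with h0 | h0
        · rw [← h0]
          norm_num [Complex.zero_cpow hne1, Complex.zero_cpow hne2]
          try ring
        · have hxC : (x:ℂ) ≠ 0 := Complex.ofReal_ne_zero.mpr (ne_of_gt h0)
          have hp2 : (x:ℂ)^((α:ℂ)+2) = (x:ℂ)^((α:ℂ)+1) * (x:ℂ) := by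
            rw [show (α:ℂ)+2 = (α:ℂ)+1+1 by ring]
            rw [Complex.cpow_add (x := (x:ℂ)) ((α:ℂ)+1) 1 hxC, Complex.cpow_one]
          have hq1 : ((1:ℂ)-(x:ℂ))^((α:ℂ)+1) = ((1:ℂ)-(x:ℂ))^(α:ℂ) * ((1:ℂ)-(x:ℂ)) := by
            rw [Complex.cpow_add _ _ hyC, Complex.cpow_one]
          rw [hp2, hq1]
          ring
    have hb2 : Complex.betaIntegral ((α:ℂ)+3) ((α:ℂ)+1) = I2 := by
      rw [Complex.betaIntegral, hI2]
      simp only [show (α:ℂ)+3-1 = (α:ℂ)+2 by ring, add_sub_cancel_right]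
    rw [hbm, hb2] at hrec
    linear_combination hrec
  -- Step 4: conclude
  have hcond : ((α:ℂ)+2)*(A:ℂ) + (2*(α:ℂ)+3)*((B:ℂ)+2*(C:ℂ)) = 0 := by
    have := congrArg (fun r : ℝ => (r:ℂ)) h
    push_cast at this
    linear_combination this
  have h23 : (2*(α:ℂ)+3) ≠ 0 := by
    intro hcon
    have := congrArg Complex.re hcon
    simp only [Complex.add_re, Complex.mul_re, Complex.ofReal_re, Complex.zero_re] at this
    norm_num at this
    linarith
  have hT : (2*(α:ℂ)+3) * ((A:ℂ)*I2 + (B:ℂ)*I1 + (C:ℂ)*I0) = 0 := by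
    linear_combination ((2*(α:ℂ)+3)*(C:ℂ)) * e1 + (-(A:ℂ)) * e2 + I1 * hcond
  have hT0 : (A:ℂ)*I2 + (B:ℂ)*I1 + (C:ℂ)*I0 = 0 :=
    (mul_eq_zero.mp hT).resolve_left h23
  rw [hT0] at key0
  exact_mod_cast key0

set_option maxHeartbeats 2000000 in
theorem psi_duality (α : ℝ) (hα : -1 < α) (hα7 : α ≠ -6 / 7) (i j : Fin 3) :
    (∫ t in (0:ℝ)..1, psi α i (t • vtx (j + 1) + (1 - t) • vtx (j + 2))) =
      (if i = j then 1 else 0) ∧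
    (∫ t in (0:ℝ)..1, t ^ α * (1 - t) ^ α * psi α i (t • vtx j + (1 - t) • mid j)) = 0 := by
  have h6 : α + 6 ≠ 0 := by linarith
  have h76 : 7 * α + 6 ≠ 0 := fun hc => hα7 (by linarith)
  -- conditions for the weighted integrals
  have hc1 : (α+2)*(3*cA α + 3*dA α/2 + 3/2) +
      (2*α+3)*((-2*cA α - dA α - 3) + 2*((3 - dA α)/2)) = 0 := by
    unfold cA dA
    have h76'' : α * 7 + 6 ≠ 0 := by intro h; apply h76; linarith
    field_simp
    ring
  have hc2 : (α+2)*(3*(cA α + dA α)/4 + 3*dA α - 3) +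
      (2*α+3)*((-(cA α + dA α)/2 - 2*dA α + 3) + 2*(-(cA α + dA α)/4)) = 0 := by
    unfold cA dA
    have h76'' : α * 7 + 6 ≠ 0 := by intro h; apply h76; linarith
    field_simp
    ring
  fin_cases i <;> fin_cases j <;> constructor
  -- i = 0, j = 0
  · exact part1_eval _ (6*dA α - 6) (6 - 6*dA α) (dA α) _
      (fun t => by simp [psi, bphi, sphi, lam, vtx, mid, cA, dA]; ring)
      (by rw [if_pos rfl]; ring)
  · exact key_integral α hα _ _ _ hc1 _
      (fun t => by simp [psi, bphi, sphi, lam, vtx, mid, cA, dA]; ring)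
  -- i = 0, j = 1  (i = j + 2)
  · exact part1_eval _ (3*cA α + 3*dA α) (-4*cA α - 2*dA α) (cA α) _
      (fun t => by simp [psi, bphi, sphi, lam, vtx, mid, cA, dA]; ring)
      (by rw [if_neg (by decide)]; ring)
  · exact key_integral α hα _ _ _ hc2 _
      (fun t => by simp [psi, bphi, sphi, lam, vtx, mid, cA, dA]; ring)
  -- i = 0, j = 2  (i = j + 1)
  · exact part1_eval _ (3*cA α + 3*dA α) (-2*cA α - 4*dA α) (dA α) _
      (fun t => by simp [psi, bphi, sphi, lam, vtx, mid, cA, dA]; ring)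
      (by rw [if_neg (by decide)]; ring)
  · exact key_integral α hα _ _ _ hc2 _
      (fun t => by simp [psi, bphi, sphi, lam, vtx, mid, cA, dA]; ring)
  -- i = 1, j = 0  (i = j + 1)
  · exact part1_eval _ (3*cA α + 3*dA α) (-2*cA α - 4*dA α) (dA α) _
      (fun t => by simp [psi, bphi, sphi, lam, vtx, mid, cA, dA]; ring)
      (by rw [if_neg (by decide)]; ring)
  · exact key_integral α hα _ _ _ hc2 _
      (fun t => by simp [psi, bphi, sphi, lam, vtx, mid, cA, dA]; ring)
  -- i = 1, j = 1
  · exact part1_eval _ (6*dA α - 6) (6 - 6*dA α) (dA α) _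
      (fun t => by simp [psi, bphi, sphi, lam, vtx, mid, cA, dA]; ring)
      (by rw [if_pos rfl]; ring)
  · exact key_integral α hα _ _ _ hc1 _
      (fun t => by simp [psi, bphi, sphi, lam, vtx, mid, cA, dA]; ring)
  -- i = 1, j = 2  (i = j + 2)
  · exact part1_eval _ (3*cA α + 3*dA α) (-4*cA α - 2*dA α) (cA α) _
      (fun t => by simp [psi, bphi, sphi, lam, vtx, mid, cA, dA]; ring)
      (by rw [if_neg (by decide)]; ring)
  · exact key_integral α hα _ _ _ hc2 _
      (fun t => by simp [psi, bphi, sphi, lam, vtx, mid, cA, dA]; ring)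
  -- i = 2, j = 0  (i = j + 2)
  · exact part1_eval _ (3*cA α + 3*dA α) (-4*cA α - 2*dA α) (cA α) _
      (fun t => by simp [psi, bphi, sphi, lam, vtx, mid, cA, dA]; ring)
      (by rw [if_neg (by decide)]; ring)
  · exact key_integral α hα _ _ _ hc2 _
      (fun t => by simp [psi, bphi, sphi, lam, vtx, mid, cA, dA]; ring)
  -- i = 2, j = 1  (i = j + 1)
  · exact part1_eval _ (3*cA α + 3*dA α) (-2*cA α - 4*dA α) (dA α) _
      (fun t => by simp [psi, bphi, sphi, lam, vtx, mid, cA, dA]; ring)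
      (by rw [if_neg (by decide)]; ring)
  · exact key_integral α hα _ _ _ hc2 _
      (fun t => by simp [psi, bphi, sphi, lam, vtx, mid, cA, dA]; ring)
  -- i = 2, j = 2
  · exact part1_eval _ (6*dA α - 6) (6 - 6*dA α) (dA α) _
      (fun t => by simp [psi, bphi, sphi, lam, vtx, mid, cA, dA]; ring)
      (by rw [if_pos rfl]; ring)
  · exact key_integral α hα _ _ _ hc1 _
      (fun t => by simp [psi, bphi, sphi, lam, vtx, mid, cA, dA]; ring)

end
end
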